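/- Let m ≥ 1 be a natural number and set θ = (m+1)/(2m). Then the polynomial identity (1 − (1−θ)mz)·(1+z)^m − (1 + θmz) in the variable z has vanishing coefficients in degrees 0, 1, and 2; equivalently, (1 − (1−θ)mz)(1+z)^m − (1 + θmz) is divisible by z³ in ℝ[z]. Hence the θ-method with θ = (m+1)/(2m) approximates m steps of forward Euler to second order. -/

import Mathlib

open Polynomial in
/-- For `θ = (m+1)/(2m)`, the polynomial `(1 − (1−θ)mz)(1+z)^m − (1 + θmz)` has
vanishing coefficients in degrees `0`, `1`, `2`; equivalently it is divisible by
`z³` in `ℝ[z]`. Hence the θ-method with this `θ` approximates `m` steps of forward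
Euler to second order. -/
theorem theta_method_second_order_polynomial (m : ℕ) (hm : 1 ≤ m) :
    let θ : ℝ := ((m : ℝ) + 1) / (2 * m)
    let p : ℝ[X] := (1 - C ((1 - θ) * m) * X) * (1 + X) ^ m - (1 + C (θ * m) * X)
    (p.coeff 0 = 0 ∧ p.coeff 1 = 0 ∧ p.coeff 2 = 0) ∧ X ^ 3 ∣ p := by
  intro θ p
  have hm0 : (m : ℝ) ≠ 0 := Nat.cast_ne_zero.mpr (by omega)
  have ha : (1 - θ) * m = ((m : ℝ) - 1) / 2 := by simp only [θ]; field_simp; ring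
  have hb : θ * m = ((m : ℝ) + 1) / 2 := by simp only [θ]; field_simp
  have hq : ∀ k, ((1 + X : ℝ[X]) ^ m).coeff k = (m.choose k : ℝ) := by
    intro k
    rw [add_comm]
    exact_mod_cast Polynomial.coeff_X_add_one_pow ℝ m k
  have hp : p = (1 + X) ^ m - C (((m : ℝ) - 1) / 2) * (X * (1 + X) ^ m)
      - 1 - C (((m : ℝ) + 1) / 2) * X := by
    simp only [p, ha, hb]; ring
  have hX : ∀ k : ℕ, ((X : ℝ[X]) * (1 + X) ^ m).coeff (k + 1) = (m.choose k : ℝ) := by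
    intro k; rw [Polynomial.coeff_X_mul, hq]
  have hX0 : ((X : ℝ[X]) * (1 + X) ^ m).coeff 0 = 0 := by simp
  have hcoeff : ∀ k ≤ 2, p.coeff k = 0 := by
    intro k hk
    interval_cases k
    · simp [hp, hq, hX0, coeff_one]
    · rw [show (1 : ℕ) = 0 + 1 from rfl]
      simp [hp, hq, hX, coeff_one]
      ring
    · rw [show (2 : ℕ) = 1 + 1 from rfl]
      simp [hp, hq, hX, coeff_one, Nat.cast_choose_two]
      ring
  exact ⟨⟨hcoeff 0 (by norm_num), hcoeff 1 (by norm_num), hcoeff 2 (by norm_num)⟩,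
    (Polynomial.X_pow_dvd_iff).mpr fun d hd => hcoeff d (by omega)⟩
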